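/- Let A > 0 and let f ∈ C¹([0,1]). For N ≥ 1 let σ_N^A(f)_∞ := inf over all partitions of [0,1] into at most N intervals, each of length at most A N^{−1}, of the global uniform-norm piecewise-constant approximation error. Then liminf_{N→∞} N · σ_N^A(f)_∞ ≥ (1/2) ∫_0^1 |f'(t)| dt. Hence for adaptive piecewise constant approximation the rate N^{−1} is governed from below by (1/2)‖f'‖_{L¹}. -/

import Mathlib

open Set Filter MeasureTheory ENNReal

/-- Local piecewise-constant approximation error of `f` on the interval `I`
in the uniform norm: `e_{1,I}(f)_∞ = inf_c sup_{x ∈ I} |f x - c|`. -/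
noncomputable def locErr (f : ℝ → ℝ) (I : Set ℝ) : ℝ :=
  ⨅ c : ℝ, ⨆ x : I, |f x.1 - c|

/-- `σ_N^A(f)_∞`: infimum (in `ℝ≥0∞`, so that it is `∞` when no admissible partition
exists) over all partitions of `[0,1]` into at most `N` intervals, each of length at
most `A/N`, of the global uniform-norm piecewise-constant approximation error. -/
noncomputable def adaptErrA (f : ℝ → ℝ) (A : ℝ) (N : ℕ) : ℝ≥0∞ :=
  sInf { e : ℝ≥0∞ | ∃ M : ℕ, 1 ≤ M ∧ M ≤ N ∧ ∃ a : ℕ → ℝ,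
    a 0 = 0 ∧ a M = 1 ∧ (∀ k < M, a k ≤ a (k + 1)) ∧
    (∀ k < M, a (k + 1) - a k ≤ A / N) ∧
    e = ENNReal.ofReal (⨆ k : Fin M, locErr f (Set.Icc (a k.1) (a (k.1 + 1)))) }

lemma locErr_nonneg (f : ℝ → ℝ) (I : Set ℝ) : 0 ≤ locErr f I :=
  le_ciInf fun _ => Real.iSup_nonneg fun _ => abs_nonneg _

lemma abs_sub_le_two_mul_locErr (f : ℝ → ℝ) {u v : ℝ} (huv : u ≤ v)
    (hf : ContinuousOn f (Set.Icc u v)) :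
    |f v - f u| ≤ 2 * locErr f (Set.Icc u v) := by
  obtain ⟨C, hC⟩ := isCompact_Icc.exists_bound_of_continuousOn hf
  have h2 : |f v - f u| / 2 ≤ locErr f (Set.Icc u v) := by
    refine le_ciInf fun c => ?_
    have hbdd : BddAbove (Set.range fun x : Set.Icc u v => |f x.1 - c|) := by
      refine ⟨C + |c|, ?_⟩
      rintro y ⟨x, rfl⟩
      have h1 : |f x.1 - c| ≤ |f x.1| + |c| := by
        have := abs_add_le (f x.1) (-c); simpa [sub_eq_add_neg] using this
      have h2 := hC x.1 x.2
      rw [Real.norm_eq_abs] at h2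
      linarith
    have hu : |f u - c| ≤ ⨆ x : Set.Icc u v, |f x.1 - c| :=
      le_ciSup hbdd (⟨u, Set.left_mem_Icc.2 huv⟩ : Set.Icc u v)
    have hv : |f v - c| ≤ ⨆ x : Set.Icc u v, |f x.1 - c| :=
      le_ciSup hbdd (⟨v, Set.right_mem_Icc.2 huv⟩ : Set.Icc u v)
    have h3 : |f v - f u| ≤ |f v - c| + |f u - c| := by
      have := abs_sub_le (f v) c (f u)
      have h4 : |c - f u| = |f u - c| := abs_sub_comm _ _
      linarith
    linarith
  linarith

/-- Lower bound for adaptive piecewise constant approximation of a `C¹` function,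
over partitions into intervals of length at most `A N⁻¹`:
`liminf_N N σ_N^A(f)_∞ ≥ (1/2)‖f\'‖_{L¹}`. -/
theorem stmt5 (A : ℝ) (hA : 0 < A) (f f' : ℝ → ℝ)
    (hderiv : ∀ x ∈ Set.Icc (0:ℝ) 1, HasDerivWithinAt f (f' x) (Set.Icc 0 1) x)
    (hcont : ContinuousOn f' (Set.Icc 0 1)) :
    ENNReal.ofReal ((1 / 2) * ∫ t in Set.Icc (0:ℝ) 1, |f' t|) ≤
      Filter.liminf (fun N : ℕ => (N : ℝ≥0∞) * adaptErrA f A N) Filter.atTop := by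
  set c : ℝ := (1 / 2) * ∫ t in Set.Icc (0:ℝ) 1, |f' t| with hc
  have hfc : ContinuousOn f (Set.Icc 0 1) := fun x hx => (hderiv x hx).continuousWithinAt
  have hIcc : ∫ t in Set.Icc (0:ℝ) 1, |f' t| = ∫ t in (0:ℝ)..1, |f' t| := by
    rw [MeasureTheory.integral_Icc_eq_integral_Ioc,
      intervalIntegral.integral_of_le (by norm_num : (0:ℝ) ≤ 1)]
  have main : ∀ ε : ℝ, 0 < ε → ENNReal.ofReal (c - ε) ≤
      Filter.liminf (fun N : ℕ => (N : ℝ≥0∞) * adaptErrA f A N) Filter.atTop := by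
    intro ε hε
    obtain ⟨δ, hδ, hmod⟩ := Metric.uniformContinuousOn_iff.1
      (isCompact_Icc.uniformContinuousOn_of_continuous hcont) ε hε
    obtain ⟨N₀, hN₀⟩ := exists_nat_gt (A / δ)
    refine Filter.le_liminf_of_le (by isBoundedDefault) ?_
    filter_upwards [Filter.eventually_ge_atTop (max 1 N₀)] with N hN
    have hN1 : 1 ≤ N := le_trans (le_max_left _ _) hN
    have hNpos : (0:ℝ) < N := by exact_mod_cast hN1
    have hmesh : A / N < δ := by
      have h1 : A / δ < (N : ℝ) := lt_of_lt_of_le hN₀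
        (by exact_mod_cast le_trans (le_max_right _ _) hN)
      rw [div_lt_iff₀ hNpos]
      have := (div_lt_iff₀ hδ).1 h1
      linarith
    have hNne : ((N : ℝ≥0∞)) ≠ 0 := by
      simp only [ne_eq, Nat.cast_eq_zero]; omega
    have key : ENNReal.ofReal (c - ε) / (N : ℝ≥0∞) ≤ adaptErrA f A N := by
      refine le_sInf ?_
      rintro e ⟨M, hM1, hMN, a, ha0, haM, hmono, hlen, rfl⟩
      haveI : Nonempty (Fin M) := ⟨⟨0, hM1⟩⟩
      set E := ⨆ k : Fin M, locErr f (Set.Icc (a k.1) (a (k.1 + 1))) with hE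
      have hEnn : 0 ≤ E := Real.iSup_nonneg fun k => locErr_nonneg _ _
      -- chain monotonicity
      have hchain : ∀ j ≤ M, ∀ i ≤ j, a i ≤ a j := by
        intro j hj
        induction j with
        | zero => intro i hi; interval_cases i; exact le_refl _
        | succ n ih =>
          intro i hi
          rcases Nat.lt_or_ge i (n + 1) with h | h
          · exact le_trans (ih (by omega) i (by omega)) (hmono n (by omega))
          · have : i = n + 1 := by omega
            subst this; exact le_refl _
      have hbounds : ∀ k ≤ M, a k ∈ Set.Icc (0:ℝ) 1 := by
        intro k hk
        constructor
        · have := hchain k hk 0 (Nat.zero_le _); rw [ha0] at this; exact this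
        · have := hchain M le_rfl k hk; rw [haM] at this; exact this
      -- per-interval facts
      have hsub : ∀ k < M, Set.Icc (a k) (a (k+1)) ⊆ Set.Icc (0:ℝ) 1 := fun k hk =>
        Set.Icc_subset_Icc (hbounds k (by omega)).1 (hbounds (k+1) (by omega)).2
      have hintf' : ∀ k < M, IntervalIntegrable f' volume (a k) (a (k+1)) := by
        intro k hk
        apply ContinuousOn.intervalIntegrable
        rw [Set.uIcc_of_le (hmono k hk)]
        exact hcont.mono (hsub k hk)
      have hintabs : ∀ k < M, IntervalIntegrable (fun t => |f' t|) volume (a k) (a (k+1)) := by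
        intro k hk
        apply ContinuousOn.intervalIntegrable
        rw [Set.uIcc_of_le (hmono k hk)]
        exact (hcont.mono (hsub k hk)).abs
      have hintd : ∀ k < M, IntervalIntegrable (fun t => |f' (a k) - f' t|) volume (a k) (a (k+1)) := by
        intro k hk
        apply ContinuousOn.intervalIntegrable
        rw [Set.uIcc_of_le (hmono k hk)]
        exact (continuousOn_const.sub (hcont.mono (hsub k hk))).abs
      have hftc : ∀ k < M, ∫ t in (a k)..(a (k+1)), f' t = f (a (k+1)) - f (a k) := by
        intro k hk
        refine intervalIntegral.integral_eq_sub_of_hasDeriv_right_of_le (hmono k hk)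
          (hfc.mono (hsub k hk)) ?_ (hintf' k hk)
        intro x hx
        have hx01 : x ∈ Set.Ioo (0:ℝ) 1 :=
          ⟨lt_of_le_of_lt (hbounds k (by omega)).1 hx.1,
           lt_of_lt_of_le hx.2 (hbounds (k+1) (by omega)).2⟩
        exact ((hderiv x (Set.Ioo_subset_Icc_self hx01)).hasDerivAt
          (Icc_mem_nhds hx01.1 hx01.2)).hasDerivWithinAt
      have hmodk : ∀ k < M, ∀ t ∈ Set.Icc (a k) (a (k+1)), |f' (a k) - f' t| ≤ ε := by
        intro k hk t ht
        have ht01 : t ∈ Set.Icc (0:ℝ) 1 := hsub k hk ht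
        have hu01 : a k ∈ Set.Icc (0:ℝ) 1 := hbounds k (by omega)
        have hd : dist (a k) t < δ := by
          rw [Real.dist_eq]
          have h1 : |a k - t| ≤ a (k+1) - a k := by
            rw [abs_sub_comm, abs_of_nonneg (by linarith [ht.1])]
            linarith [ht.2]
          exact lt_of_le_of_lt h1 (lt_of_le_of_lt (hlen k hk) hmesh)
        have := hmod (a k) hu01 t ht01 hd
        rw [Real.dist_eq] at this
        exact le_of_lt this
      -- per-interval integral bound
      have hstep : ∀ k < M, ∫ t in (a k)..(a (k+1)), |f' t| ≤
          2 * locErr f (Set.Icc (a k) (a (k+1))) + 2 * ε * (a (k+1) - a k) := by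
        intro k hk
        set u := a k
        set v := a (k+1)
        have huv : u ≤ v := hmono k hk
        have I1 : ∫ t in u..v, |f' t| ≤ (v - u) * (|f' u| + ε) := by
          have hmono' : ∀ t ∈ Set.Icc u v, |f' t| ≤ |f' u| + ε := by
            intro t ht
            have h1 : |f' t| - |f' u| ≤ |f' t - f' u| := abs_sub_abs_le_abs_sub _ _
            have h2 := hmodk k hk t ht
            rw [abs_sub_comm] at h2
            linarith
          calc ∫ t in u..v, |f' t| ≤ ∫ _t in u..v, (|f' u| + ε) :=
                intervalIntegral.integral_mono_on huv (hintabs k hk)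
                  intervalIntegrable_const hmono'
            _ = (v - u) * (|f' u| + ε) := by
                rw [intervalIntegral.integral_const, smul_eq_mul]
        have I2 : (v - u) * |f' u| ≤ |f v - f u| + ε * (v - u) := by
          have heq : ∫ _t in u..v, f' u = (∫ t in u..v, f' t) + ∫ t in u..v, (f' u - f' t) := by
            rw [← intervalIntegral.integral_add (hintf' k hk)
              ((intervalIntegrable_const).sub (hintf' k hk))]
            congr 1
            funext t; ring
          have h3 : |∫ t in u..v, (f' u - f' t)| ≤ ∫ t in u..v, |f' u - f' t| :=
            intervalIntegral.abs_integral_le_integral_abs huv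
          have h4 : ∫ t in u..v, |f' u - f' t| ≤ ε * (v - u) := by
            calc ∫ t in u..v, |f' u - f' t| ≤ ∫ _t in u..v, ε :=
                  intervalIntegral.integral_mono_on huv (hintd k hk)
                    intervalIntegrable_const (hmodk k hk)
              _ = (v - u) * ε := by rw [intervalIntegral.integral_const, smul_eq_mul]
              _ = ε * (v - u) := mul_comm _ _
          have h5 : (v - u) * |f' u| = |∫ _t in u..v, f' u| := by
            rw [intervalIntegral.integral_const, smul_eq_mul, abs_mul,
              abs_of_nonneg (by linarith : (0:ℝ) ≤ v - u)]
          rw [h5, heq, hftc k hk]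
          calc |f v - f u + ∫ t in u..v, (f' u - f' t)| ≤
                |f v - f u| + |∫ t in u..v, (f' u - f' t)| := abs_add_le _ _
            _ ≤ |f v - f u| + ε * (v - u) := by linarith
        have I3 : |f v - f u| ≤ 2 * locErr f (Set.Icc u v) :=
          abs_sub_le_two_mul_locErr f huv (hfc.mono (hsub k hk))
        nlinarith [I1, I2, I3]
      -- sum everything
      have hlocE : ∀ k < M, locErr f (Set.Icc (a k) (a (k+1))) ≤ E := fun k hk =>
        le_ciSup (f := fun k : Fin M => locErr f (Set.Icc (a k.1) (a (k.1 + 1))))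
          (Set.Finite.bddAbove (Set.finite_range _)) ⟨k, hk⟩
      have hsum1 : ∑ k ∈ Finset.range M, ∫ t in (a k)..(a (k+1)), |f' t| =
          ∫ t in (0:ℝ)..1, |f' t| := by
        rw [intervalIntegral.sum_integral_adjacent_intervals hintabs, ha0, haM]
      have hsum2 : ∑ k ∈ Finset.range M, (a (k+1) - a k) = 1 := by
        rw [Finset.sum_range_sub, ha0, haM]; ring
      have hsum3 : ∫ t in (0:ℝ)..1, |f' t| ≤ 2 * M * E + 2 * ε := by
        rw [← hsum1]
        calc ∑ k ∈ Finset.range M, ∫ t in (a k)..(a (k+1)), |f' t|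
            ≤ ∑ k ∈ Finset.range M, (2 * E + 2 * ε * (a (k+1) - a k)) := by
              refine Finset.sum_le_sum fun k hk => ?_
              have hk' := Finset.mem_range.1 hk
              calc ∫ t in (a k)..(a (k+1)), |f' t| ≤
                    2 * locErr f (Set.Icc (a k) (a (k+1))) + 2 * ε * (a (k+1) - a k) :=
                    hstep k hk'
                _ ≤ 2 * E + 2 * ε * (a (k+1) - a k) := by
                    have := hlocE k hk'; linarith
          _ = 2 * M * E + 2 * ε := by
              rw [Finset.sum_add_distrib, Finset.sum_const, ← Finset.mul_sum, hsum2,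
                Finset.card_range]
              push_cast; ring
      have hMNr : (M : ℝ) ≤ (N : ℝ) := by exact_mod_cast hMN
      have hfinal : c - ε ≤ (N : ℝ) * E := by
        rw [hc, hIcc]
        nlinarith [hsum3, hEnn, hMNr]
      -- convert to ENNReal
      rw [ENNReal.div_le_iff_le_mul (Or.inl hNne) (Or.inl (ENNReal.natCast_ne_top N))]
      calc ENNReal.ofReal (c - ε) ≤ ENNReal.ofReal ((N : ℝ) * E) :=
            ENNReal.ofReal_le_ofReal hfinal
        _ = ENNReal.ofReal E * (N : ℝ≥0∞) := by
            rw [ENNReal.ofReal_mul (by positivity : (0:ℝ) ≤ (N:ℝ)), ENNReal.ofReal_natCast,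
              mul_comm]
    calc ENNReal.ofReal (c - ε) = (N : ℝ≥0∞) * (ENNReal.ofReal (c - ε) / (N : ℝ≥0∞)) :=
          (ENNReal.mul_div_cancel hNne (ENNReal.natCast_ne_top N)).symm
      _ ≤ (N : ℝ≥0∞) * adaptErrA f A N := mul_le_mul_right key _
  refine ENNReal.le_of_forall_pos_le_add fun ε hε _ => ?_
  calc ENNReal.ofReal c = ENNReal.ofReal ((c - ε) + ε) := by ring_nf
    _ ≤ ENNReal.ofReal (c - ε) + ENNReal.ofReal ε := ENNReal.ofReal_add_le
    _ ≤ Filter.liminf (fun N : ℕ => (N : ℝ≥0∞) * adaptErrA f A N) Filter.atTop + ε := by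
        refine add_le_add (main ε (by exact_mod_cast hε)) ?_
        rw [ENNReal.ofReal_coe_nnreal]
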